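/- arXiv:1201.1229 — 8 statements merged into one kernel-verified Lean document; each statement's English description precedes it below -/
import Mathlib

section
/- If p and q are nonzero integers and A_0 is an integer root of Q_{pq}, then A_0 ≠ 0, A_0 divides p^2 q^2, and B_0 = p^2 q^2 / A_0 is an integer root of Q_{qp}. -/
def Q (p q t : ℤ) : ℤ :=
  t^10 + (2*q^2+p^2)*(3*q^2-2*p^2)*t^8
    + (q^8+10*p^2*q^6+4*p^4*q^4-14*p^6*q^2+p^8)*t^6
    - p^2*q^2*(p^8+10*q^2*p^6+4*q^4*p^4-14*q^6*p^2+q^8)*t^4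
    - p^6*q^6*(2*p^2+q^2)*(3*p^2-2*q^2)*t^2
    - q^10*p^10

theorem Q_root_inversion (p q A₀ : ℤ) (hp : p ≠ 0) (hq : q ≠ 0)
    (hroot : Q p q A₀ = 0) :
    A₀ ≠ 0 ∧ A₀ ∣ p^2 * q^2 ∧ Q q p (p^2 * q^2 / A₀) = 0 := by
  have hpq : p^2 * q^2 ≠ 0 := by positivity
  -- A₀ ≠ 0
  have hA : A₀ ≠ 0 := by
    rintro rfl
    unfold Q at hroot
    have h0 : q^10 * p^10 = 0 := by linear_combination -hroot
    exact mul_ne_zero (pow_ne_zero 10 hq) (pow_ne_zero 10 hp) h0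
  -- key identity E(p,q,A₀) = 0
  have hE0 : (p^2*q^2)^10 + (2*p^2+q^2)*(3*p^2-2*q^2)*(p^2*q^2)^8*A₀^2
      + (p^8+10*q^2*p^6+4*q^4*p^4-14*q^6*p^2+q^8)*(p^2*q^2)^6*A₀^4
      - q^2*p^2*(q^8+10*p^2*q^6+4*p^4*q^4-14*p^6*q^2+p^8)*(p^2*q^2)^4*A₀^6
      - q^6*p^6*(2*q^2+p^2)*(3*q^2-2*p^2)*(p^2*q^2)^2*A₀^8
      - p^10*q^10*A₀^10 = 0 := by
    have h := hroot
    unfold Q at h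
    linear_combination (-(p^2*q^2)^5) * h
  -- divisibility
  set d : ℤ := (Int.gcd A₀ (p^2*q^2) : ℤ) with hd
  have hdA : d ∣ A₀ := Int.gcd_dvd_left A₀ (p^2*q^2)
  have hdN : d ∣ p^2 * q^2 := Int.gcd_dvd_right A₀ (p^2*q^2)
  have hd0 : d ≠ 0 := by
    simp only [hd, ne_eq, Int.natCast_eq_zero, Int.gcd_eq_zero_iff]
    rintro ⟨h1, -⟩; exact hA h1
  have ha : d * (A₀ / d) = A₀ := Int.mul_ediv_cancel' hdA
  have hn : d * (p^2 * q^2 / d) = p^2 * q^2 := Int.mul_ediv_cancel' hdN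
  set a : ℤ := A₀ / d with hadef
  set n : ℤ := p^2 * q^2 / d with hndef
  clear_value d a n
  have hco : IsCoprime a n := by
    rw [Int.isCoprime_iff_gcd_eq_one, hadef, hndef, hd]
    exact Int.gcd_div_gcd_div_gcd (Int.gcd_pos_of_ne_zero_left _ hA)
  have hF : n^10 + (2*p^2+q^2)*(3*p^2-2*q^2)*n^8*a^2
      + (p^8+10*q^2*p^6+4*q^4*p^4-14*q^6*p^2+q^8)*n^6*a^4
      - q^2*p^2*(q^8+10*p^2*q^6+4*p^4*q^4-14*p^6*q^2+p^8)*n^4*a^6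
      - q^6*p^6*(2*q^2+p^2)*(3*q^2-2*p^2)*n^2*a^8
      - p^10*q^10*a^10 = 0 := by
    apply mul_left_cancel₀ (pow_ne_zero 10 hd0)
    rw [← ha, ← hn] at hE0
    linear_combination hE0
  have hadvd : a ∣ n^10 := by
    refine ⟨-((2*p^2+q^2)*(3*p^2-2*q^2)*n^8*a
      + (p^8+10*q^2*p^6+4*q^4*p^4-14*q^6*p^2+q^8)*n^6*a^3
      - q^2*p^2*(q^8+10*p^2*q^6+4*p^4*q^4-14*p^6*q^2+p^8)*n^4*a^5
      - q^6*p^6*(2*q^2+p^2)*(3*q^2-2*p^2)*n^2*a^7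
      - p^10*q^10*a^9), ?_⟩
    linear_combination hF
  have haunit : IsUnit a := (hco.pow_right (n := 10)).isUnit_of_dvd' dvd_rfl hadvd
  have hAd : A₀ ∣ d := by
    rcases Int.isUnit_iff.mp haunit with h1 | h1
    · exact ⟨1, by rw [← ha, h1]; ring⟩
    · exact ⟨-1, by rw [← ha, h1]; ring⟩
  have hAdvd : A₀ ∣ p^2 * q^2 := hAd.trans hdN
  refine ⟨hA, hAdvd, ?_⟩
  have hB : A₀ * (p^2 * q^2 / A₀) = p^2 * q^2 := Int.mul_ediv_cancel' hAdvd
  set B : ℤ := p^2 * q^2 / A₀ with hBdef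
  have hgen : A₀^10 * Q q p B = (A₀*B)^10 + (2*p^2+q^2)*(3*p^2-2*q^2)*(A₀*B)^8*A₀^2
      + (p^8+10*q^2*p^6+4*q^4*p^4-14*q^6*p^2+q^8)*(A₀*B)^6*A₀^4
      - q^2*p^2*(q^8+10*p^2*q^6+4*p^4*q^4-14*p^6*q^2+p^8)*(A₀*B)^4*A₀^6
      - q^6*p^6*(2*q^2+p^2)*(3*q^2-2*p^2)*(A₀*B)^2*A₀^8
      - p^10*q^10*A₀^10 := by
    unfold Q; ring
  rw [hB] at hgen
  have : A₀^10 * Q q p B = 0 := by linear_combination hgen + hE0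
  exact (mul_eq_zero.mp this).resolve_left (pow_ne_zero 10 hA)
end

section
/- Let p, q be nonzero integers. The polynomial Q_{pq}(t) has an integer root if and only if there exist integers C_4, D_4, C_6, D_6 and positive integers A_0, B_0 satisfying: A_0·C_4 = B_0·D_4; A_0·B_0 = p^2 q^2; C_6 - A_0^2 = (2q^2+p^2)(3q^2-2p^2); D_6 - B_0^2 = (2p^2+q^2)(3p^2-2q^2); C_4 - A_0^2·C_6 = p^8 - 14p^6q^2 + 4p^4q^4 + 10p^2q^6 + q^8; and D_4 - B_0^2·D_6 = q^8 - 14q^6p^2 + 4q^4p^4 + 10q^2p^6 + p^8. -/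
/-- Key algebraic identity: when `a*b = p²q²`,
`Q p q a = a^5 * (a*C₄ - b*D₄)` for the canonical `C₄, D₄`. -/
lemma Q_alg (p q a b : ℤ) (hab : a * b = p^2 * q^2) :
    Q p q a = a^5 *
      (a*(a^2*(a^2+(2*q^2+p^2)*(3*q^2-2*p^2))
          +(p^8 - 14*p^6*q^2 + 4*p^4*q^4 + 10*p^2*q^6 + q^8))
        - b*(b^2*(b^2+(2*p^2+q^2)*(3*p^2-2*q^2))
          +(q^8 - 14*q^6*p^2 + 4*q^4*p^4 + 10*q^2*p^6 + p^8))) := by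
  simp only [Q]
  linear_combination ((a^4*b^4) + (-2*q^4*a^4*b^2) + (q^8*a^4) + (p^2*q^2*a^3*b^3)
    + (-1*p^2*q^2*a^4*b^2) + (-2*p^2*q^6*a^3*b) + (-14*p^2*q^6*a^4) + (6*p^4*a^4*b^2)
    + (p^4*q^4*a^2*b^2) + (-1*p^4*q^4*a^3*b) + (4*p^4*q^4*a^4) + (-2*p^4*q^8*a^2)
    + (6*p^6*q^2*a^3*b) + (10*p^6*q^2*a^4) + (p^6*q^6*a*b) + (-1*p^6*q^6*a^2)
    + (p^8*a^4) + (6*p^8*q^4*a^2) + (p^8*q^8)) * hab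

lemma pow_dvd_pow_help (x y : ℤ) (k m n : ℕ) (h : x^k ∣ y) (hmn : m ≤ k*n) :
    x^m ∣ y^n :=
  (pow_dvd_pow x hmn).trans (pow_mul x k n ▸ pow_dvd_pow_of_dvd h n)

/-- Divisibility lemma via prime valuations. -/
lemma dvd_of_poly_eq (t N c1 c2 c3 c4 : ℤ) (hN : N ≠ 0)
    (h : N^5 = t^10 + c1*t^8 + c2*t^6 + N*c3*t^4 + N^3*c4*t^2) : t ∣ N := by
  have ht : t ≠ 0 := by
    rintro rfl
    rw [show (0:ℤ)^10 + c1*0^8 + c2*0^6 + N*c3*0^4 + N^3*c4*0^2 = 0 by ring] at h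
    have hN0 : N = 0 := (pow_eq_zero_iff (by norm_num : (5:ℕ) ≠ 0)).mp h
    exact hN hN0
  have ha : t.natAbs ≠ 0 := Int.natAbs_ne_zero.mpr ht
  have hm : N.natAbs ≠ 0 := Int.natAbs_ne_zero.mpr hN
  rw [← Int.natAbs_dvd_natAbs]
  rw [← Nat.factorization_le_iff_dvd ha hm]
  rw [Finsupp.le_def]
  intro ℓ
  by_cases hℓ : ℓ.Prime
  · set w := N.natAbs.factorization ℓ with hw
    by_contra hlt
    push_neg at hlt
    have h1 : (ℓ:ℤ)^(w+1) ∣ t := by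
      have h1' : (ℓ:ℕ)^(w+1) ∣ t.natAbs :=
        (Nat.Prime.pow_dvd_iff_le_factorization hℓ ha).mpr (by omega)
      have := Int.natCast_dvd_natCast.mpr h1'
      push_cast at this
      simpa using this
    have h2 : (ℓ:ℤ)^w ∣ N := by
      have h2' : (ℓ:ℕ)^w ∣ N.natAbs := Nat.ordProj_dvd _ _
      have := Int.natCast_dvd_natCast.mpr h2'
      push_cast at this
      simpa using this
    have h5 : (ℓ:ℤ)^(5*w+1) ∣ N^5 := by
      rw [h]
      have d1 : (ℓ:ℤ)^(5*w+1) ∣ t^10 := pow_dvd_pow_help _ _ _ _ _ h1 (by omega)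
      have d2 : (ℓ:ℤ)^(5*w+1) ∣ c1*t^8 :=
        Dvd.dvd.mul_left (pow_dvd_pow_help _ _ _ _ _ h1 (by omega)) c1
      have d3 : (ℓ:ℤ)^(5*w+1) ∣ c2*t^6 :=
        Dvd.dvd.mul_left (pow_dvd_pow_help _ _ _ _ _ h1 (by omega)) c2
      have d4 : (ℓ:ℤ)^(5*w+1) ∣ N*c3*t^4 := by
        have hh : (ℓ:ℤ)^(5*w+1) ∣ N * t^4 := by
          rw [show 5*w+1 = w + (4*w+1) by omega, pow_add]
          exact mul_dvd_mul h2 (pow_dvd_pow_help _ _ _ _ _ h1 (by omega))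
        exact hh.trans ⟨c3, by ring⟩
      have d5 : (ℓ:ℤ)^(5*w+1) ∣ N^3*c4*t^2 := by
        have hh : (ℓ:ℤ)^(5*w+1) ∣ N^3 * t^2 := by
          rw [show 5*w+1 = 3*w + (2*w+1) by omega, pow_add]
          exact mul_dvd_mul (pow_dvd_pow_help _ _ _ _ _ h2 (by omega))
            (pow_dvd_pow_help _ _ _ _ _ h1 (by omega))
        exact hh.trans ⟨c4, by ring⟩
      exact dvd_add (dvd_add (dvd_add (dvd_add d1 d2) d3) d4) d5
    have h6 : (ℓ:ℕ)^(5*w+1) ∣ N.natAbs^5 := by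
      have := Int.natAbs_dvd_natAbs.mpr h5
      simpa [Int.natAbs_pow] using this
    have h7 := (Nat.Prime.pow_dvd_iff_le_factorization hℓ (pow_ne_zero 5 hm)).mp h6
    rw [Nat.factorization_pow] at h7
    simp only [Finsupp.smul_apply, smul_eq_mul] at h7
    omega
  · simp [Nat.factorization_eq_zero_of_not_prime _ hℓ]

theorem Q_integer_root_iff_system (p q : ℤ) (hp : p ≠ 0) (hq : q ≠ 0) :
    (∃ t : ℤ, Q p q t = 0) ↔
      ∃ (C₄ D₄ C₆ D₆ A₀ B₀ : ℤ), 0 < A₀ ∧ 0 < B₀ ∧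
        A₀ * C₄ = B₀ * D₄ ∧
        A₀ * B₀ = p^2 * q^2 ∧
        C₆ - A₀^2 = (2*q^2+p^2)*(3*q^2-2*p^2) ∧
        D₆ - B₀^2 = (2*p^2+q^2)*(3*p^2-2*q^2) ∧
        C₄ - A₀^2*C₆ = p^8 - 14*p^6*q^2 + 4*p^4*q^4 + 10*p^2*q^6 + q^8 ∧
        D₄ - B₀^2*D₆ = q^8 - 14*q^6*p^2 + 4*q^4*p^4 + 10*q^2*p^6 + p^8 := by
  have hN : (p^2*q^2 : ℤ) ≠ 0 := by positivity
  have hNpos : (0:ℤ) < p^2*q^2 := by positivity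
  constructor
  · rintro ⟨t, ht⟩
    have ht0 : t ≠ 0 := by
      rintro rfl
      simp only [Q] at ht
      have h0 : (q^10*p^10 : ℤ) = 0 := by linear_combination -ht
      exact absurd h0 (by positivity)
    have ht' : Q p q |t| = 0 := by
      rcases abs_choice t with h | h <;> rw [h] <;> simp only [Q] at ht ⊢ <;>
        linear_combination ht
    have hdvd : |t| ∣ p^2*q^2 := by
      refine dvd_of_poly_eq |t| (p^2*q^2)
        ((2*q^2+p^2)*(3*q^2-2*p^2))
        (q^8+10*p^2*q^6+4*p^4*q^4-14*p^6*q^2+p^8)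
        (-(p^8+10*q^2*p^6+4*q^4*p^4-14*q^6*p^2+q^8))
        (-((2*p^2+q^2)*(3*p^2-2*q^2))) hN ?_
      simp only [Q] at ht'
      linear_combination -ht'
    obtain ⟨b, hb⟩ := hdvd
    have habs : (0:ℤ) < |t| := abs_pos.mpr ht0
    have hbpos : 0 < b := by nlinarith
    refine ⟨|t|^2*(|t|^2+(2*q^2+p^2)*(3*q^2-2*p^2))
        +(p^8 - 14*p^6*q^2 + 4*p^4*q^4 + 10*p^2*q^6 + q^8),
      b^2*(b^2+(2*p^2+q^2)*(3*p^2-2*q^2))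
        +(q^8 - 14*q^6*p^2 + 4*q^4*p^4 + 10*q^2*p^6 + p^8),
      |t|^2+(2*q^2+p^2)*(3*q^2-2*p^2), b^2+(2*p^2+q^2)*(3*p^2-2*q^2),
      |t|, b, habs, hbpos, ?_, hb.symm, by ring, by ring, by ring, by ring⟩
    have key := Q_alg p q |t| b hb.symm
    rw [ht'] at key
    have h0 := (mul_eq_zero.mp key.symm).resolve_left (pow_ne_zero 5 (ne_of_gt habs))
    linarith [sub_eq_zero.mp h0]
  · rintro ⟨C4, D4, C6, D6, a, b, ha, hb, h1, h2, h3, h4, h5, h6⟩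
    refine ⟨a, ?_⟩
    have e3 : C6 = a^2 + (2*q^2+p^2)*(3*q^2-2*p^2) := by linarith
    subst e3
    have e4 : D6 = b^2 + (2*p^2+q^2)*(3*p^2-2*q^2) := by linarith
    subst e4
    have e5 : C4 = a^2*(a^2+(2*q^2+p^2)*(3*q^2-2*p^2))
        + (p^8 - 14*p^6*q^2 + 4*p^4*q^4 + 10*p^2*q^6 + q^8) := by linarith
    subst e5
    have e6 : D4 = b^2*(b^2+(2*p^2+q^2)*(3*p^2-2*q^2))
        + (q^8 - 14*q^6*p^2 + 4*q^4*p^4 + 10*q^2*p^6 + p^8) := by linarith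
    subst e6
    rw [Q_alg p q a b h2]
    linear_combination a^5 * h1
end

section
/- Let p, q be positive coprime integers. Suppose A_0, B_0 are positive integers with A_0·B_0 = p^2 q^2 such that for every prime r dividing gcd(A_0, B_0), the r-adic valuations satisfy v_r(A_0) = v_r(B_0) = v_r(p·q). Then there exist positive pairwise coprime integers a_p, b_p, c_p, a_q, b_q, c_q with p = a_p·b_p·c_p, q = a_q·b_q·c_q, A_0 = a_p^2·c_p·a_q^2·c_q, and B_0 = b_p^2·c_p·b_q^2·c_q. -/
lemma exists_sq_of_even_factorization {n : ℕ} (hn : n ≠ 0)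
    (h : ∀ p, Even (n.factorization p)) : ∃ m : ℕ, m * m = n := by
  refine ⟨n.factorization.prod fun p k => p ^ (k / 2), ?_⟩
  rw [← Finsupp.prod_mul]
  conv_rhs => rw [← Nat.factorization_prod_pow_eq_self hn]
  apply Finsupp.prod_congr
  intro p hp
  rw [← pow_add]
  congr 1
  obtain ⟨k, hk⟩ := h p
  omega

theorem six_number_decomposition (p q A₀ B₀ : ℕ)
    (hp : 0 < p) (hq : 0 < q) (hpq : Nat.gcd p q = 1)
    (hA : 0 < A₀) (hB : 0 < B₀)
    (hAB : A₀ * B₀ = p^2 * q^2)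
    (hval : ∀ r : ℕ, r.Prime → r ∣ Nat.gcd A₀ B₀ →
      padicValNat r A₀ = padicValNat r B₀ ∧ padicValNat r A₀ = padicValNat r (p * q)) :
    ∃ aₚ bₚ cₚ a_q b_q c_q : ℕ,
      0 < aₚ ∧ 0 < bₚ ∧ 0 < cₚ ∧ 0 < a_q ∧ 0 < b_q ∧ 0 < c_q ∧
      List.Pairwise Nat.Coprime [aₚ, bₚ, cₚ, a_q, b_q, c_q] ∧
      p = aₚ * bₚ * cₚ ∧ q = a_q * b_q * c_q ∧
      A₀ = aₚ^2 * cₚ * a_q^2 * c_q ∧ B₀ = bₚ^2 * cₚ * b_q^2 * c_q := by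
  have hpq' : Nat.Coprime p q := hpq
  set G := Nat.gcd A₀ B₀ with hGdef
  have hG0 : G ≠ 0 := Nat.gcd_ne_zero_left hA.ne'
  -- factorization sum identity
  have hfAB : ∀ r, A₀.factorization r + B₀.factorization r = 2 * (p*q).factorization r := by
    intro r
    have h : A₀ * B₀ = (p*q)^2 := by rw [hAB]; ring
    have h2 := congrArg (fun n => n.factorization r) h
    simpa [Nat.factorization_mul hA.ne' hB.ne', Nat.factorization_pow,
      Finsupp.add_apply, Finsupp.smul_apply, smul_eq_mul] using h2
  -- for primes dividing G
  have hGA : ∀ r : ℕ, r.Prime → r ∣ G →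
      A₀.factorization r = B₀.factorization r ∧
      A₀.factorization r = (p*q).factorization r ∧
      G.factorization r = A₀.factorization r := by
    intro r hr hdvd
    obtain ⟨h1, h2⟩ := hval r hr hdvd
    rw [← Nat.factorization_def A₀ hr, ← Nat.factorization_def B₀ hr] at h1
    rw [← Nat.factorization_def A₀ hr, ← Nat.factorization_def (p*q) hr] at h2
    refine ⟨h1, h2, ?_⟩
    rw [hGdef, Nat.factorization_gcd hA.ne' hB.ne', Finsupp.inf_apply, h1, min_self]
  -- G divides p*q
  have hGdvd : G ∣ p * q := by
    rw [← Nat.factorization_le_iff_dvd hG0 (Nat.mul_ne_zero hp.ne' hq.ne')]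
    intro r
    by_cases hr : r.Prime
    · by_cases hdvd : r ∣ G
      · rw [(hGA r hr hdvd).2.2, (hGA r hr hdvd).2.1]
      · simp [Nat.factorization_eq_zero_of_not_dvd hdvd]
    · simp [Nat.factorization_eq_zero_of_not_prime _ hr]
  obtain ⟨sA, hsA⟩ : G ∣ A₀ := Nat.gcd_dvd_left A₀ B₀
  obtain ⟨sB, hsB⟩ : G ∣ B₀ := Nat.gcd_dvd_right A₀ B₀
  have hsA0 : sA ≠ 0 := by rintro rfl; simp at hsA; omega
  have hsB0 : sB ≠ 0 := by rintro rfl; simp at hsB; omega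
  have hfA : ∀ r, A₀.factorization r = G.factorization r + sA.factorization r := by
    intro r
    rw [hsA, Nat.factorization_mul hG0 hsA0]; rfl
  have hfB : ∀ r, B₀.factorization r = G.factorization r + sB.factorization r := by
    intro r
    rw [hsB, Nat.factorization_mul hG0 hsB0]; rfl
  -- sA and sB have even factorization
  have hevenA : ∀ r, Even (sA.factorization r) := by
    intro r
    by_cases hr : r.Prime
    · by_cases hdvd : r ∣ G
      · have h1 := (hGA r hr hdvd).2.2
        have h2 := hfA r
        have : sA.factorization r = 0 := by omega
        simp [this]
      · have hGz : G.factorization r = 0 := Nat.factorization_eq_zero_of_not_dvd hdvd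
        by_cases hra : r ∣ A₀
        · have hrb : ¬ r ∣ B₀ := fun h => hdvd (Nat.dvd_gcd hra h)
          have hBz : B₀.factorization r = 0 := Nat.factorization_eq_zero_of_not_dvd hrb
          have := hfAB r
          have := hfA r
          refine ⟨(p*q).factorization r, by omega⟩
        · have : A₀.factorization r = 0 := Nat.factorization_eq_zero_of_not_dvd hra
          have := hfA r
          refine ⟨0, by omega⟩
    · simp [Nat.factorization_eq_zero_of_not_prime _ hr]
  have hevenB : ∀ r, Even (sB.factorization r) := by
    intro r
    by_cases hr : r.Prime
    · by_cases hdvd : r ∣ G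
      · have h1 := (hGA r hr hdvd).1
        have h1' := (hGA r hr hdvd).2.2
        have h2 := hfB r
        have : sB.factorization r = 0 := by omega
        simp [this]
      · have hGz : G.factorization r = 0 := Nat.factorization_eq_zero_of_not_dvd hdvd
        by_cases hrb : r ∣ B₀
        · have hra : ¬ r ∣ A₀ := fun h => hdvd (Nat.dvd_gcd h hrb)
          have hAz : A₀.factorization r = 0 := Nat.factorization_eq_zero_of_not_dvd hra
          have := hfAB r
          have := hfB r
          refine ⟨(p*q).factorization r, by omega⟩
        · have : B₀.factorization r = 0 := Nat.factorization_eq_zero_of_not_dvd hrb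
          have := hfB r
          refine ⟨0, by omega⟩
    · simp [Nat.factorization_eq_zero_of_not_prime _ hr]
  obtain ⟨a, ha⟩ := exists_sq_of_even_factorization hsA0 hevenA
  obtain ⟨b, hb⟩ := exists_sq_of_even_factorization hsB0 hevenB
  have ha0 : a ≠ 0 := by rintro rfl; simp at ha; exact hsA0 ha.symm
  have hb0 : b ≠ 0 := by rintro rfl; simp at hb; exact hsB0 hb.symm
  -- no prime divides both a and G, nor both b and G
  have claimA : ∀ r : ℕ, r.Prime → r ∣ a → ¬ r ∣ G := by
    intro r hr hra hrG
    have h1 := (hGA r hr hrG).2.2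
    have h2 := hfA r
    have h3 : sA.factorization r = a.factorization r + a.factorization r := by
      rw [← ha, Nat.factorization_mul ha0 ha0]; rfl
    have h4 : 0 < a.factorization r := hr.factorization_pos_of_dvd ha0 hra
    omega
  have claimB : ∀ r : ℕ, r.Prime → r ∣ b → ¬ r ∣ G := by
    intro r hr hrb hrG
    have h1 := (hGA r hr hrG).1
    have h1' := (hGA r hr hrG).2.2
    have h2 := hfB r
    have h3 : sB.factorization r = b.factorization r + b.factorization r := by
      rw [← hb, Nat.factorization_mul hb0 hb0]; rfl
    have h4 : 0 < b.factorization r := hr.factorization_pos_of_dvd hb0 hrb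
    omega
  have hadA : a ∣ A₀ := ⟨G * a, by rw [hsA, ← ha]; ring⟩
  have hbdB : b ∣ B₀ := ⟨G * b, by rw [hsB, ← hb]; ring⟩
  have haG : Nat.Coprime a G := by
    rw [Nat.coprime_iff_gcd_eq_one]
    by_contra h
    obtain ⟨r, hr, hrd⟩ := Nat.exists_prime_and_dvd h
    exact claimA r hr (hrd.trans (Nat.gcd_dvd_left _ _)) (hrd.trans (Nat.gcd_dvd_right _ _))
  have hbG : Nat.Coprime b G := by
    rw [Nat.coprime_iff_gcd_eq_one]
    by_contra h
    obtain ⟨r, hr, hrd⟩ := Nat.exists_prime_and_dvd h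
    exact claimB r hr (hrd.trans (Nat.gcd_dvd_left _ _)) (hrd.trans (Nat.gcd_dvd_right _ _))
  have hab : Nat.Coprime a b := by
    rw [Nat.coprime_iff_gcd_eq_one]
    by_contra h
    obtain ⟨r, hr, hrd⟩ := Nat.exists_prime_and_dvd h
    have hra : r ∣ a := hrd.trans (Nat.gcd_dvd_left _ _)
    have hrb : r ∣ b := hrd.trans (Nat.gcd_dvd_right _ _)
    exact claimA r hr hra (Nat.dvd_gcd (hra.trans hadA) (hrb.trans hbdB))
  -- main product identity
  have hprod : a * b * G = p * q := by
    rw [← Nat.mul_self_inj]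
    calc (a * b * G) * (a * b * G) = (G * (a * a)) * (G * (b * b)) := by ring
    _ = A₀ * B₀ := by rw [ha, hb, ← hsA, ← hsB]
    _ = (p * q) * (p * q) := by rw [hAB]; ring
  have hapq : a ∣ p * q := ⟨b * G, by rw [← hprod]; ring⟩
  have hbpq : b ∣ p * q := ⟨a * G, by rw [← hprod]; ring⟩
  -- split into p-parts and q-parts
  refine ⟨Nat.gcd a p, Nat.gcd b p, Nat.gcd G p, Nat.gcd a q, Nat.gcd b q, Nat.gcd G q,
    Nat.gcd_pos_of_pos_right _ hp, Nat.gcd_pos_of_pos_right _ hp, Nat.gcd_pos_of_pos_right _ hp,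
    Nat.gcd_pos_of_pos_right _ hq, Nat.gcd_pos_of_pos_right _ hq, Nat.gcd_pos_of_pos_right _ hq,
    ?_, ?_, ?_, ?_, ?_⟩
  case _ =>
    have c1 : Nat.Coprime (Nat.gcd a p) (Nat.gcd b p) :=
      Nat.Coprime.coprime_dvd_left (Nat.gcd_dvd_left a p)
        (Nat.Coprime.coprime_dvd_right (Nat.gcd_dvd_left b p) hab)
    have c2 : Nat.Coprime (Nat.gcd a p) (Nat.gcd G p) :=
      Nat.Coprime.coprime_dvd_left (Nat.gcd_dvd_left a p)
        (Nat.Coprime.coprime_dvd_right (Nat.gcd_dvd_left G p) haG)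
    have c3 : Nat.Coprime (Nat.gcd b p) (Nat.gcd G p) :=
      Nat.Coprime.coprime_dvd_left (Nat.gcd_dvd_left b p)
        (Nat.Coprime.coprime_dvd_right (Nat.gcd_dvd_left G p) hbG)
    have c4 : Nat.Coprime (Nat.gcd a q) (Nat.gcd b q) :=
      Nat.Coprime.coprime_dvd_left (Nat.gcd_dvd_left a q)
        (Nat.Coprime.coprime_dvd_right (Nat.gcd_dvd_left b q) hab)
    have c5 : Nat.Coprime (Nat.gcd a q) (Nat.gcd G q) :=
      Nat.Coprime.coprime_dvd_left (Nat.gcd_dvd_left a q)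
        (Nat.Coprime.coprime_dvd_right (Nat.gcd_dvd_left G q) haG)
    have c6 : Nat.Coprime (Nat.gcd b q) (Nat.gcd G q) :=
      Nat.Coprime.coprime_dvd_left (Nat.gcd_dvd_left b q)
        (Nat.Coprime.coprime_dvd_right (Nat.gcd_dvd_left G q) hbG)
    have cross : ∀ x y : ℕ, Nat.Coprime (Nat.gcd x p) (Nat.gcd y q) := fun x y =>
      Nat.Coprime.coprime_dvd_left (Nat.gcd_dvd_right x p)
        (Nat.Coprime.coprime_dvd_right (Nat.gcd_dvd_right y q) hpq')
    refine List.Pairwise.cons ?_ (List.Pairwise.cons ?_ (List.Pairwise.cons ?_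
      (List.Pairwise.cons ?_ (List.Pairwise.cons ?_ (List.pairwise_singleton _ _)))))
    · intro x hx
      simp only [List.mem_cons, List.not_mem_nil, or_false] at hx
      rcases hx with rfl|rfl|rfl|rfl|rfl
      exacts [c1, c2, cross a a, cross a b, cross a G]
    · intro x hx
      simp only [List.mem_cons, List.not_mem_nil, or_false] at hx
      rcases hx with rfl|rfl|rfl|rfl
      exacts [c3, cross b a, cross b b, cross b G]
    · intro x hx
      simp only [List.mem_cons, List.not_mem_nil, or_false] at hx
      rcases hx with rfl|rfl|rfl
      exacts [cross G a, cross G b, cross G G]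
    · intro x hx
      simp only [List.mem_cons, List.not_mem_nil, or_false] at hx
      rcases hx with rfl|rfl
      exacts [c4, c5]
    · intro x hx
      simp only [List.mem_cons, List.not_mem_nil, or_false] at hx
      rcases hx with rfl
      exact c6
  all_goals {
    have hsplita : Nat.gcd a p * Nat.gcd a q = a :=
      (Nat.gcd_mul_gcd_eq_iff_dvd_mul_of_coprime hpq').mpr hapq
    have hsplitb : Nat.gcd b p * Nat.gcd b q = b :=
      (Nat.gcd_mul_gcd_eq_iff_dvd_mul_of_coprime hpq').mpr hbpq
    have hsplitG : Nat.gcd G p * Nat.gcd G q = G :=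
      (Nat.gcd_mul_gcd_eq_iff_dvd_mul_of_coprime hpq').mpr hGdvd
    -- P * Q = p * q with P ∣ p, Q ∣ q
    have hPQ : (Nat.gcd a p * Nat.gcd b p * Nat.gcd G p) *
        (Nat.gcd a q * Nat.gcd b q * Nat.gcd G q) = p * q := by
      calc (Nat.gcd a p * Nat.gcd b p * Nat.gcd G p) *
          (Nat.gcd a q * Nat.gcd b q * Nat.gcd G q)
          = (Nat.gcd a p * Nat.gcd a q) * (Nat.gcd b p * Nat.gcd b q) *
            (Nat.gcd G p * Nat.gcd G q) := by ring
      _ = a * b * G := by rw [hsplita, hsplitb, hsplitG]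
      _ = p * q := hprod
    have cab : Nat.Coprime (Nat.gcd a p) (Nat.gcd b p) :=
      Nat.Coprime.coprime_dvd_left (Nat.gcd_dvd_left a p)
        (Nat.Coprime.coprime_dvd_right (Nat.gcd_dvd_left b p) hab)
    have caG : Nat.Coprime (Nat.gcd a p) (Nat.gcd G p) :=
      Nat.Coprime.coprime_dvd_left (Nat.gcd_dvd_left a p)
        (Nat.Coprime.coprime_dvd_right (Nat.gcd_dvd_left G p) haG)
    have cbG : Nat.Coprime (Nat.gcd b p) (Nat.gcd G p) :=
      Nat.Coprime.coprime_dvd_left (Nat.gcd_dvd_left b p)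
        (Nat.Coprime.coprime_dvd_right (Nat.gcd_dvd_left G p) hbG)
    have cab' : Nat.Coprime (Nat.gcd a q) (Nat.gcd b q) :=
      Nat.Coprime.coprime_dvd_left (Nat.gcd_dvd_left a q)
        (Nat.Coprime.coprime_dvd_right (Nat.gcd_dvd_left b q) hab)
    have caG' : Nat.Coprime (Nat.gcd a q) (Nat.gcd G q) :=
      Nat.Coprime.coprime_dvd_left (Nat.gcd_dvd_left a q)
        (Nat.Coprime.coprime_dvd_right (Nat.gcd_dvd_left G q) haG)
    have cbG' : Nat.Coprime (Nat.gcd b q) (Nat.gcd G q) :=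
      Nat.Coprime.coprime_dvd_left (Nat.gcd_dvd_left b q)
        (Nat.Coprime.coprime_dvd_right (Nat.gcd_dvd_left G q) hbG)
    have hPp : Nat.gcd a p * Nat.gcd b p * Nat.gcd G p ∣ p :=
      Nat.Coprime.mul_dvd_of_dvd_of_dvd (Nat.Coprime.mul caG cbG)
        (Nat.Coprime.mul_dvd_of_dvd_of_dvd cab (Nat.gcd_dvd_right a p)
          (Nat.gcd_dvd_right b p)) (Nat.gcd_dvd_right G p)
    have hQq : Nat.gcd a q * Nat.gcd b q * Nat.gcd G q ∣ q :=
      Nat.Coprime.mul_dvd_of_dvd_of_dvd (Nat.Coprime.mul caG' cbG')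
        (Nat.Coprime.mul_dvd_of_dvd_of_dvd cab' (Nat.gcd_dvd_right a q)
          (Nat.gcd_dvd_right b q)) (Nat.gcd_dvd_right G q)
    obtain ⟨k, hk⟩ := hPp
    obtain ⟨l, hl⟩ := hQq
    have hP0 : 0 < Nat.gcd a p * Nat.gcd b p * Nat.gcd G p := by
      have := Nat.gcd_pos_of_pos_right a hp
      have := Nat.gcd_pos_of_pos_right b hp
      have := Nat.gcd_pos_of_pos_right G hp
      positivity
    have hQ0 : 0 < Nat.gcd a q * Nat.gcd b q * Nat.gcd G q := by
      have := Nat.gcd_pos_of_pos_right a hq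
      have := Nat.gcd_pos_of_pos_right b hq
      have := Nat.gcd_pos_of_pos_right G hq
      positivity
    have hkl : k * l = 1 := by
      have h1 : (Nat.gcd a p * Nat.gcd b p * Nat.gcd G p) *
          (Nat.gcd a q * Nat.gcd b q * Nat.gcd G q) * (k * l)
          = (Nat.gcd a p * Nat.gcd b p * Nat.gcd G p) *
            (Nat.gcd a q * Nat.gcd b q * Nat.gcd G q) * 1 := by
        rw [mul_one]
        calc (Nat.gcd a p * Nat.gcd b p * Nat.gcd G p) *
            (Nat.gcd a q * Nat.gcd b q * Nat.gcd G q) * (k * l)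
            = ((Nat.gcd a p * Nat.gcd b p * Nat.gcd G p) * k) *
              ((Nat.gcd a q * Nat.gcd b q * Nat.gcd G q) * l) := by ring
        _ = p * q := by rw [← hk, ← hl]
        _ = (Nat.gcd a p * Nat.gcd b p * Nat.gcd G p) *
            (Nat.gcd a q * Nat.gcd b q * Nat.gcd G q) := hPQ.symm
      exact Nat.eq_of_mul_eq_mul_left (by positivity) h1
    have hk1 : k = 1 := Nat.eq_one_of_mul_eq_one_right hkl
    have hl1 : l = 1 := Nat.eq_one_of_mul_eq_one_left hkl
    subst hk1 hl1
    rw [mul_one] at hk hl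
    first
      | exact hk
      | exact hl
      | ((conv_lhs => rw [hsA, ← ha, ← hsplita, ← hsplitG]); ring)
      | ((conv_lhs => rw [hsB, ← hb, ← hsplitb, ← hsplitG]); ring)
  }
end

section
/- Let p, q be positive coprime integers with p ≠ q, and suppose positive integers A_0, B_0 satisfy A_0·B_0 = p^2 q^2 and A_0·(A_0^4 + (2q^2+p^2)(3q^2-2p^2)A_0^2 + p^8-14p^6q^2+4p^4q^4+10p^2q^6+q^8) = B_0·(B_0^4 + (2p^2+q^2)(3p^2-2q^2)B_0^2 + q^8-14q^6p^2+4q^4p^4+10q^2p^6+p^8). Then the polynomial Q_{pq}(t) has an integer root, namely t = A_0. -/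
theorem root_from_system (p q A₀ B₀ : ℤ)
    (hp : 0 < p) (hq : 0 < q) (hpq : IsCoprime p q) (hne : p ≠ q)
    (hA : 0 < A₀) (hB : 0 < B₀)
    (hAB : A₀ * B₀ = p^2 * q^2)
    (heq : A₀ * (A₀^4 + (2*q^2+p^2)*(3*q^2-2*p^2)*A₀^2
              + p^8 - 14*p^6*q^2 + 4*p^4*q^4 + 10*p^2*q^6 + q^8)
         = B₀ * (B₀^4 + (2*p^2+q^2)*(3*p^2-2*q^2)*B₀^2
              + q^8 - 14*q^6*p^2 + 4*q^4*p^4 + 10*q^2*p^6 + p^8)) :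
    Q p q A₀ = 0 := by 
  unfold Q
  linear_combination A₀^5 * heq +
    ((A₀*B₀)^4 + (A₀*B₀)^3*(p^2*q^2) + (A₀*B₀)^2*(p^2*q^2)^2
      + (A₀*B₀)*(p^2*q^2)^3 + (p^2*q^2)^4
      + (2*p^2+q^2)*(3*p^2-2*q^2)*A₀^2*((A₀*B₀)^2 + (A₀*B₀)*(p^2*q^2) + (p^2*q^2)^2)
      + (q^8-14*q^6*p^2+4*q^4*p^4+10*q^2*p^6+p^8)*A₀^4) * hAB
end

section
/- For q = 1 and any prime p, the equation Q_{p,1}(t) = 0 has no integer solutions t, where Q_{p,1}(t) = t^{10} + (2+p^2)(3-2p^2)t^8 + (1+10p^2+4p^4-14p^6+p^8)t^6 - p^2(p^8+10p^6+4p^4-14p^2+1)t^4 - p^6(2p^2+1)(3p^2-2)t^2 - p^{10}. -/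
theorem no_root_q_one (p : ℤ) (hp : 0 < p) (hprime : Prime p) (t : ℤ) :
    t^10 + (2+p^2)*(3-2*p^2)*t^8 + (1+10*p^2+4*p^4-14*p^6+p^8)*t^6
      - p^2*(p^8+10*p^6+4*p^4-14*p^2+1)*t^4
      - p^6*(2*p^2+1)*(3*p^2-2)*t^2 - p^10 ≠ 0 := by
  intro h
  have hp2 : 2 ≤ p := by
    have h1 := hprime.ne_one
    omega
  -- t divides p^10
  have hdvd : t ∣ p ^ 10 := by
    refine ⟨t^9 + (2+p^2)*(3-2*p^2)*t^7 + (1+10*p^2+4*p^4-14*p^6+p^8)*t^5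
      - p^2*(p^8+10*p^6+4*p^4-14*p^2+1)*t^3
      - p^6*(2*p^2+1)*(3*p^2-2)*t, ?_⟩
    linear_combination -h
  obtain ⟨i, hi, hassoc⟩ := (dvd_prime_pow hprime 10).mp hdvd
  have ht2 : t ^ 2 = (p ^ i) ^ 2 := by
    rcases Int.associated_iff.mp hassoc with h' | h' <;> rw [h'] <;> ring
  -- rewrite the equation in terms of t^2
  have h2 : ((p^i)^2)^5 + (2+p^2)*(3-2*p^2)*((p^i)^2)^4
      + (1+10*p^2+4*p^4-14*p^6+p^8)*((p^i)^2)^3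
      - p^2*(p^8+10*p^6+4*p^4-14*p^2+1)*((p^i)^2)^2
      - p^6*(2*p^2+1)*(3*p^2-2)*((p^i)^2) - p^10 = 0 := by
    rw [← ht2]; linear_combination h
  match i with
  | 0 =>
    have e : 8+8*p^2+16*p^4-16*p^6-8*p^8-8*p^10 = 0 := by linear_combination h2
    have h4 : (4:ℤ) ≤ p^2 := by nlinarith
    nlinarith [pow_pos hp 8, pow_pos hp 10,
      mul_nonneg (pow_pos hp 4).le (by linarith : (0:ℤ) ≤ p^2-4),
      mul_nonneg (pow_pos hp 2).le (by linarith : (0:ℤ) ≤ p^2-4)]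
  | 1 =>
    have e : 32*p^8 - 32*p^12 = 0 := by linear_combination h2
    nlinarith [mul_pos (pow_pos hp 8) (show (0:ℤ) < p^4 - 1 by have : (1:ℤ) < p^4 := one_lt_pow₀ (by omega) (by norm_num); linarith)]
  | 2 =>
    have e : 16*p^12 - 16*p^18 = 0 := by linear_combination h2
    nlinarith [mul_pos (pow_pos hp 12) (show (0:ℤ) < p^6 - 1 by have : (1:ℤ) < p^6 := one_lt_pow₀ (by omega) (by norm_num); linarith)]
  | (n+3) =>
    have h3 : p ^ 10 * 1 = p ^ 10 * (p ^ 2 *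
        (p^18*(p^n)^10 + (2+p^2)*(3-2*p^2)*p^12*(p^n)^8
          + (1+10*p^2+4*p^4-14*p^6+p^8)*p^6*(p^n)^6
          - p^2*(p^8+10*p^6+4*p^4-14*p^2+1)*(p^n)^4
          - (2*p^2+1)*(3*p^2-2)*(p^n)^2)) := by
      linear_combination -h2
    have h4 := mul_left_cancel₀ (pow_ne_zero 10 hp.ne') h3
    have h5 : (p:ℤ)^2 ∣ 1 := ⟨_, h4⟩
    have h6 := Int.le_of_dvd one_pos h5
    nlinarith
end

section
/- For p = 1 and any prime q, the equation Q_{1,q}(t) = 0 has no integer solutions t, where Q_{1,q}(t) = t^{10} + (2q^2+1)(3q^2-2)t^8 + (q^8+10q^6+4q^4-14q^2+1)t^6 - q^2(1+10q^2+4q^4-14q^6+q^8)t^4 - q^6(2+q^2)(3-2q^2)t^2 - q^{10}. -/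
private lemma pow_gain (q : ℤ) (hq : 2 ≤ q) (n m : ℕ) : 2^n * q^m ≤ q^(n+m) := by
  have h0 : (0:ℤ) ≤ q := by linarith
  calc 2^n * q^m ≤ q^n * q^m :=
        mul_le_mul_of_nonneg_right (pow_le_pow_left₀ (by norm_num) hq n) (pow_nonneg h0 m)
    _ = q^(n+m) := (pow_add q n m).symm

theorem no_root_p_one (q : ℤ) (hq : 0 < q) (hprime : Prime q) (t : ℤ) :
    t^10 + (2*q^2+1)*(3*q^2-2)*t^8 + (q^8+10*q^6+4*q^4-14*q^2+1)*t^6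
      - q^2*(1+10*q^2+4*q^4-14*q^6+q^8)*t^4
      - q^6*(2+q^2)*(3-2*q^2)*t^2 - q^10 ≠ 0 := by
  intro h
  have hq2 : (2:ℤ) ≤ q := by
    rcases lt_or_ge q 2 with h2 | h2
    · interval_cases q
      · exact absurd rfl hprime.ne_one
    · exact h2
  have hq1 : (1:ℤ) ≤ q := by linarith
  have hq0 : (0:ℤ) ≤ q := by linarith
  have hdvd : t^2 ∣ (q^5)^2 := by
    refine ⟨t^8 + (2*q^2+1)*(3*q^2-2)*t^6 + (q^8+10*q^6+4*q^4-14*q^2+1)*t^4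
      - q^2*(1+10*q^2+4*q^4-14*q^6+q^8)*t^2
      - q^6*(2+q^2)*(3-2*q^2), ?_⟩
    linear_combination -h
  have ht : t ∣ q^5 := (Int.pow_dvd_pow_iff (two_ne_zero)).mp hdvd
  obtain ⟨k, hk5, ha⟩ := (dvd_prime_pow hprime 5).mp ht
  have ht2 : t = q^k ∨ t = -q^k := Int.associated_iff.mp ha
  interval_cases k
  · -- k = 0 : f0 = 16 q^8 - 16 q^2
    have g1 := pow_gain q hq2 6 2
    have p1 : (0:ℤ) < q^2 := pow_pos hq 2
    rcases ht2 with rfl | rfl <;> norm_num at g1 <;> nlinarith [h]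
  · -- k = 1 : f1 = 32 q^12 - 32 q^8
    have g1 := pow_gain q hq2 4 8
    have p1 : (0:ℤ) < q^8 := pow_pos hq 8
    rcases ht2 with rfl | rfl <;> norm_num at g1 <;> nlinarith [h]
  · -- k = 2
    have g1 := pow_gain q hq2 6 14
    have m1 : q^10 ≤ q^14 := pow_le_pow_right₀ hq1 (by norm_num)
    have m2 : q^12 ≤ q^14 := pow_le_pow_right₀ hq1 (by norm_num)
    have p1 : (0:ℤ) < q^14 := pow_pos hq 14
    have n1 : (0:ℤ) ≤ q^16 := pow_nonneg hq0 16
    have n2 : (0:ℤ) ≤ q^18 := pow_nonneg hq0 18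
    rcases ht2 with rfl | rfl <;> norm_num at g1 <;> nlinarith [h]
  · -- k = 3
    have g1 := pow_gain q hq2 12 18
    have m1 : q^10 ≤ q^18 := pow_le_pow_right₀ hq1 (by norm_num)
    have m2 : q^12 ≤ q^18 := pow_le_pow_right₀ hq1 (by norm_num)
    have m3 : q^16 ≤ q^18 := pow_le_pow_right₀ hq1 (by norm_num)
    have p1 : (0:ℤ) < q^18 := pow_pos hq 18
    have n1 : (0:ℤ) ≤ q^22 := pow_nonneg hq0 22
    have n2 : (0:ℤ) ≤ q^24 := pow_nonneg hq0 24
    have n3 : (0:ℤ) ≤ q^28 := pow_nonneg hq0 28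
    rcases ht2 with rfl | rfl <;> norm_num at g1 <;> nlinarith [h]
  · -- k = 4
    have g1 := pow_gain q hq2 6 34
    have m1 : q^10 ≤ q^34 := pow_le_pow_right₀ hq1 (by norm_num)
    have m2 : q^14 ≤ q^34 := pow_le_pow_right₀ hq1 (by norm_num)
    have m3 : q^20 ≤ q^34 := pow_le_pow_right₀ hq1 (by norm_num)
    have m4 : q^22 ≤ q^34 := pow_le_pow_right₀ hq1 (by norm_num)
    have m5 : q^26 ≤ q^34 := pow_le_pow_right₀ hq1 (by norm_num)
    have m6 : q^32 ≤ q^34 := pow_le_pow_right₀ hq1 (by norm_num)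
    have p1 : (0:ℤ) < q^34 := pow_pos hq 34
    have n1 : (0:ℤ) ≤ q^16 := pow_nonneg hq0 16
    have n2 : (0:ℤ) ≤ q^18 := pow_nonneg hq0 18
    have n3 : (0:ℤ) ≤ q^24 := pow_nonneg hq0 24
    have n4 : (0:ℤ) ≤ q^28 := pow_nonneg hq0 28
    have n5 : (0:ℤ) ≤ q^30 := pow_nonneg hq0 30
    have n6 : (0:ℤ) ≤ q^36 := pow_nonneg hq0 36
    rcases ht2 with rfl | rfl <;> norm_num at g1 <;> nlinarith [h]
  · -- k = 5
    have g1 := pow_gain q hq2 8 42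
    have m1 : q^10 ≤ q^42 := pow_le_pow_right₀ hq1 (by norm_num)
    have m2 : q^16 ≤ q^42 := pow_le_pow_right₀ hq1 (by norm_num)
    have m3 : q^22 ≤ q^42 := pow_le_pow_right₀ hq1 (by norm_num)
    have m4 : q^24 ≤ q^42 := pow_le_pow_right₀ hq1 (by norm_num)
    have m5 : q^26 ≤ q^42 := pow_le_pow_right₀ hq1 (by norm_num)
    have m6 : q^32 ≤ q^42 := pow_le_pow_right₀ hq1 (by norm_num)
    have m7 : q^40 ≤ q^42 := pow_le_pow_right₀ hq1 (by norm_num)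
    have p1 : (0:ℤ) < q^42 := pow_pos hq 42
    have n1 : (0:ℤ) ≤ q^18 := pow_nonneg hq0 18
    have n2 : (0:ℤ) ≤ q^20 := pow_nonneg hq0 20
    have n3 : (0:ℤ) ≤ q^28 := pow_nonneg hq0 28
    have n4 : (0:ℤ) ≤ q^34 := pow_nonneg hq0 34
    have n5 : (0:ℤ) ≤ q^36 := pow_nonneg hq0 36
    have n6 : (0:ℤ) ≤ q^38 := pow_nonneg hq0 38
    rcases ht2 with rfl | rfl <;> norm_num at g1 <;> nlinarith [h]
end

section
/- If p, q are positive coprime integers with p ≠ q and Q_{pq} has an integer root A_0 > 0, then writing B_0 = p^2q^2/A_0, the polynomial Q_{pq}(t) factors in Z[t] as (t^2 - A_0^2)·(t^8 + C_6 t^6 + C_4 t^4 + D_6 p^2 q^2 B_0^2 t^2 + p^6 q^6 B_0^2) where C_6 = A_0^2 + (2q^2+p^2)(3q^2-2p^2), D_6 = B_0^2 + (2p^2+q^2)(3p^2-2q^2), and C_4 = A_0^4 + (2q^2+p^2)(3q^2-2p^2)A_0^2 + p^8-14p^6q^2+4p^4q^4+10p^2q^6+q^8. -/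
open Polynomial in
noncomputable def Qpoly (p q : ℤ) : Polynomial ℤ :=
  X^10 + C ((2*q^2+p^2)*(3*q^2-2*p^2)) * X^8
    + C (q^8+10*p^2*q^6+4*p^4*q^4-14*p^6*q^2+p^8) * X^6
    - C (p^2*q^2*(p^8+10*q^2*p^6+4*q^4*p^4-14*q^6*p^2+q^8)) * X^4
    - C (p^6*q^6*(2*p^2+q^2)*(3*p^2-2*q^2)) * X^2
    - C (q^10*p^10)

open Polynomial in
theorem Q_factorization (p q A₀ B₀ : ℤ)
    (hp : 0 < p) (hq : 0 < q) (hpq : IsCoprime p q) (hne : p ≠ q)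
    (hA : 0 < A₀) (hroot : Q p q A₀ = 0)
    (hB : 0 < B₀) (hAB : A₀ * B₀ = p^2 * q^2) :
    Qpoly p q =
      (X^2 - C (A₀^2)) *
        (X^8 + C (A₀^2 + (2*q^2+p^2)*(3*q^2-2*p^2)) * X^6
          + C (A₀^4 + (2*q^2+p^2)*(3*q^2-2*p^2)*A₀^2
              + p^8 - 14*p^6*q^2 + 4*p^4*q^4 + 10*p^2*q^6 + q^8) * X^4
          + C ((B₀^2 + (2*p^2+q^2)*(3*p^2-2*q^2)) * p^2 * q^2 * B₀^2) * X^2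
          + C (p^6 * q^6 * B₀^2)) := by
  have hroot' : A₀^10 + (2*q^2+p^2)*(3*q^2-2*p^2)*A₀^8
    + (q^8+10*p^2*q^6+4*p^4*q^4-14*p^6*q^2+p^8)*A₀^6
    - p^2*q^2*(p^8+10*q^2*p^6+4*q^4*p^4-14*q^6*p^2+q^8)*A₀^4
    - p^6*q^6*(2*p^2+q^2)*(3*p^2-2*q^2)*A₀^2
    - q^10*p^10 = 0 := hroot
  have hAne : A₀ ≠ 0 := hA.ne'
  have h0 : A₀^2 * (p^6 * q^6 * B₀^2) = q^10*p^10 := by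
    linear_combination p^6*q^6*(A₀*B₀+p^2*q^2)*hAB
  have h2 : p^6 * q^6 * B₀^2
      - A₀^2 * ((B₀^2 + (2*p^2+q^2)*(3*p^2-2*q^2)) * p^2 * q^2 * B₀^2)
      = -(p^6*q^6*(2*p^2+q^2)*(3*p^2-2*q^2)) := by
    linear_combination (-(B₀^2 + (2*p^2+q^2)*(3*p^2-2*q^2))*p^2*q^2*(A₀*B₀+p^2*q^2))*hAB
  have h4 : (B₀^2 + (2*p^2+q^2)*(3*p^2-2*q^2)) * p^2 * q^2 * B₀^2
      - A₀^2 * (A₀^4 + (2*q^2+p^2)*(3*q^2-2*p^2)*A₀^2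
          + p^8 - 14*p^6*q^2 + 4*p^4*q^4 + 10*p^2*q^6 + q^8)
      = -(p^2*q^2*(p^8+10*q^2*p^6+4*q^4*p^4-14*q^6*p^2+q^8)) := by
    have key : A₀^4 * ((B₀^2 + (2*p^2+q^2)*(3*p^2-2*q^2)) * p^2 * q^2 * B₀^2
        - A₀^2 * (A₀^4 + (2*q^2+p^2)*(3*q^2-2*p^2)*A₀^2
            + p^8 - 14*p^6*q^2 + 4*p^4*q^4 + 10*p^2*q^6 + q^8))
        = A₀^4 * (-(p^2*q^2*(p^8+10*q^2*p^6+4*q^4*p^4-14*q^6*p^2+q^8))) := by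
      linear_combination (-1)*hroot' + ((A₀*B₀+p^2*q^2)*p^2*q^2*((2*p^2+q^2)*(3*p^2-2*q^2)*A₀^2 + A₀^2*B₀^2 + p^4*q^4))*hAB
    exact mul_left_cancel₀ (pow_ne_zero 4 hAne) key
  have H4 := congrArg C h4
  have H2 := congrArg C h2
  have H0 := congrArg C h0
  unfold Qpoly
  simp only [C_mul, C_add, C_sub, C_neg, C_pow, map_ofNat, C_1, C_0] at H4 H2 H0 ⊢
  linear_combination (-(Polynomial.X (R := ℤ))^4) * H4 - (Polynomial.X (R := ℤ))^2 * H2 + H0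
end

section
/- For positive integers p, q with gcd(p,q)=1 and p ≠ q, the Diophantine equation Q_{pq}(t) = 0 is solvable in integers t if and only if there exist six positive pairwise coprime integers a_p, b_p, c_p, a_q, b_q, c_q with p = a_p b_p c_p, q = a_q b_q c_q such that, setting A_0 = a_p^2 c_p a_q^2 c_q and B_0 = b_p^2 c_p b_q^2 c_q, one has A_0(A_0^4 + (2q^2+p^2)(3q^2-2p^2)A_0^2 + p^8-14p^6q^2+4p^4q^4+10p^2q^6+q^8) = B_0(B_0^4 + (2p^2+q^2)(3p^2-2q^2)B_0^2 + q^8-14q^6p^2+4q^4p^4+10q^2p^6+p^8). In that case t = ±A_0 are integer roots of Q_{pq}. -/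
lemma Q_neg (p q x : ℤ) : Q p q (-x) = Q p q x := by
  simp only [Q]; ring

lemma natco {a b : ℕ} (h : Nat.Coprime a b) : IsCoprime (a : ℤ) (b : ℤ) :=
  Nat.isCoprime_iff_coprime.mpr h

/-- Auxiliary divisibility lemma: if `ℓ^(k+1) ∤ x`, `ℓ ∤ u`, `x*u = y*w` and
`ℓ^(k+1) ∣ y`, we get a contradiction. -/
lemma aux_pp {ℓ : ℕ} (hℓ : ℓ.Prime) {k : ℕ} {x u y w : ℤ}
    (hx' : ¬ (ℓ:ℤ)^(k+1) ∣ x) (hu : ¬ (ℓ:ℤ) ∣ u)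
    (h : x * u = y * w) (hy : (ℓ:ℤ)^(k+1) ∣ y) : False := by
  have hprime : Prime (ℓ:ℤ) := Nat.prime_iff_prime_int.mp hℓ
  have hco : IsCoprime ((ℓ:ℤ)^(k+1)) u :=
    IsCoprime.pow_left ((hprime.coprime_iff_not_dvd).mpr hu)
  have hdvd : (ℓ:ℤ)^(k+1) ∣ x * u := h ▸ (hy.mul_right w)
  exact hx' (hco.dvd_of_dvd_mul_right hdvd)

/-- Decomposition of a divisor of `p^2` whose prime valuations are `0`, `e` or `2e`. -/
lemma decomp : ∀ p T : ℕ, 0 < p → T ∣ p ^ 2 →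
    (∀ ℓ : ℕ, ℓ.Prime →
      T.factorization ℓ = 0 ∨ T.factorization ℓ = p.factorization ℓ ∨
      T.factorization ℓ = 2 * p.factorization ℓ) →
    ∃ a b c : ℕ, 0 < a ∧ 0 < b ∧ 0 < c ∧ p = a * b * c ∧ T = a ^ 2 * c ∧
      Nat.Coprime a b ∧ Nat.Coprime a c ∧ Nat.Coprime b c := by
  intro p
  induction p using Nat.strong_induction_on with
  | _ p ih =>
  intro T hp hT hval
  by_cases hp1 : p = 1
  · subst hp1
    have hT1 : T = 1 := Nat.dvd_one.mp (by simpa using hT)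
    exact ⟨1, 1, 1, one_pos, one_pos, one_pos, by norm_num, by simp [hT1],
      Nat.coprime_one_left 1, Nat.coprime_one_left 1, Nat.coprime_one_left 1⟩
  · set ℓ := p.minFac with hℓdef
    have hℓ : ℓ.Prime := Nat.minFac_prime hp1
    have hℓdvd : ℓ ∣ p := Nat.minFac_dvd p
    have hp0 : p ≠ 0 := hp.ne'
    set e := p.factorization ℓ with hedef
    have he : 0 < e := hℓ.factorization_pos_of_dvd hp0 hℓdvd
    set p' := p / ℓ ^ e with hp'def
    have hp'pos : 0 < p' := Nat.ordCompl_pos ℓ hp0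
    have hpfac : ℓ ^ e * p' = p := Nat.ordProj_mul_ordCompl_eq_self p ℓ
    have hℓp' : ¬ ℓ ∣ p' := Nat.not_dvd_ordCompl hℓ hp0
    have hlt : p' < p := Nat.div_lt_self hp (Nat.one_lt_pow (by omega) hℓ.one_lt)
    have hT0 : T ≠ 0 := (Nat.pos_of_dvd_of_pos hT (by positivity)).ne'
    set k := T.factorization ℓ with hkdef
    set T' := T / ℓ ^ k with hT'def
    have hTfac : ℓ ^ k * T' = T := Nat.ordProj_mul_ordCompl_eq_self T ℓ
    have hℓT' : ¬ ℓ ∣ T' := Nat.not_dvd_ordCompl hℓ hT0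
    have hT'p' : T' ∣ p' ^ 2 := by
      have h1 : T' ∣ p ^ 2 := dvd_trans (Dvd.intro_left _ hTfac) hT
      have h2 : p ^ 2 = ℓ ^ (2 * e) * p' ^ 2 := by rw [← hpfac]; ring
      have hco : Nat.Coprime T' (ℓ ^ (2 * e)) :=
        (Nat.Coprime.pow_left _ (hℓ.coprime_iff_not_dvd.mpr hℓT')).symm
      exact hco.dvd_of_dvd_mul_left (h2 ▸ h1)
    have hval' : ∀ r : ℕ, r.Prime →
        T'.factorization r = 0 ∨ T'.factorization r = p'.factorization r ∨
        T'.factorization r = 2 * p'.factorization r := by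
      intro r hr
      rcases eq_or_ne r ℓ with rfl | hne
      · left
        rw [hT'def, hkdef, Nat.factorization_ordCompl]
        simp
      · rw [hT'def, hkdef, hp'def, hedef, Nat.factorization_ordCompl,
          Nat.factorization_ordCompl, Finsupp.erase_ne hne, Finsupp.erase_ne hne]
        exact hval r hr
    obtain ⟨a, b, c, ha, hb, hc, hpeq, hTeq, hab, hac, hbc⟩ :=
      ih p' hlt T' hp'pos hT'p' hval'
    have hadvd : a ∣ p' := ⟨b * c, by rw [hpeq]; ring⟩
    have hbdvd : b ∣ p' := ⟨a * c, by rw [hpeq]; ring⟩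
    have hcdvd : c ∣ p' := ⟨a * b, by rw [hpeq]; ring⟩
    have hℓa : Nat.Coprime (ℓ ^ e) a :=
      Nat.Coprime.pow_left _ (hℓ.coprime_iff_not_dvd.mpr fun h => hℓp' (h.trans hadvd))
    have hℓb : Nat.Coprime (ℓ ^ e) b :=
      Nat.Coprime.pow_left _ (hℓ.coprime_iff_not_dvd.mpr fun h => hℓp' (h.trans hbdvd))
    have hℓc : Nat.Coprime (ℓ ^ e) c :=
      Nat.Coprime.pow_left _ (hℓ.coprime_iff_not_dvd.mpr fun h => hℓp' (h.trans hcdvd))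
    have hℓpos : 0 < ℓ ^ e := pow_pos hℓ.pos e
    rcases hval ℓ hℓ with hk | hk | hk
    · -- k = 0 : ℓ^e goes to b
      have hk' : k = 0 := by rw [hkdef, hk]
      refine ⟨a, ℓ ^ e * b, c, ha, by positivity, hc, ?_, ?_, ?_, hac, ?_⟩
      · rw [← hpfac, hpeq]; ring
      · rw [← hTfac, hk', hTeq]; ring
      · exact (hℓa.symm.mul_right hab)
      · exact Nat.Coprime.mul hℓc hbc
    · -- k = e : ℓ^e goes to c
      have hk' : k = e := by rw [hkdef, hk]
      refine ⟨a, b, ℓ ^ e * c, ha, hb, by positivity, ?_, ?_, hab, ?_, ?_⟩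
      · rw [← hpfac, hpeq]; ring
      · rw [← hTfac, hk', hTeq]; ring
      · exact hℓa.symm.mul_right hac
      · exact hℓb.symm.mul_right hbc
    · -- k = 2e : ℓ^e goes to a
      have hk' : k = 2 * e := by rw [hkdef, hk]
      refine ⟨ℓ ^ e * a, b, c, by positivity, hb, hc, ?_, ?_, ?_, ?_, hbc⟩
      · rw [← hpfac, hpeq]; ring
      · rw [← hTfac, hk', hTeq]; ring
      · exact Nat.Coprime.mul hℓb hab
      · exact Nat.Coprime.mul hℓc hac

set_option maxHeartbeats 2000000 in
theorem structural_theorem (p q : ℤ)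
    (hp : 0 < p) (hq : 0 < q) (hpq : IsCoprime p q) (hne : p ≠ q) :
    ((∃ t : ℤ, Q p q t = 0) ↔
      ∃ aₚ bₚ cₚ a_q b_q c_q : ℤ,
        0 < aₚ ∧ 0 < bₚ ∧ 0 < cₚ ∧ 0 < a_q ∧ 0 < b_q ∧ 0 < c_q ∧
        List.Pairwise (fun x y => IsCoprime x y) [aₚ, bₚ, cₚ, a_q, b_q, c_q] ∧
        p = aₚ * bₚ * cₚ ∧ q = a_q * b_q * c_q ∧
        (aₚ^2 * cₚ * a_q^2 * c_q) *
          ((aₚ^2 * cₚ * a_q^2 * c_q)^4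
            + (2*q^2+p^2)*(3*q^2-2*p^2)*(aₚ^2 * cₚ * a_q^2 * c_q)^2
            + p^8 - 14*p^6*q^2 + 4*p^4*q^4 + 10*p^2*q^6 + q^8)
        = (bₚ^2 * cₚ * b_q^2 * c_q) *
          ((bₚ^2 * cₚ * b_q^2 * c_q)^4
            + (2*p^2+q^2)*(3*p^2-2*q^2)*(bₚ^2 * cₚ * b_q^2 * c_q)^2
            + q^8 - 14*q^6*p^2 + 4*q^4*p^4 + 10*q^2*p^6 + p^8)) ∧
    (∀ aₚ bₚ cₚ a_q b_q c_q : ℤ,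
        0 < aₚ → 0 < bₚ → 0 < cₚ → 0 < a_q → 0 < b_q → 0 < c_q →
        List.Pairwise (fun x y => IsCoprime x y) [aₚ, bₚ, cₚ, a_q, b_q, c_q] →
        p = aₚ * bₚ * cₚ → q = a_q * b_q * c_q →
        (aₚ^2 * cₚ * a_q^2 * c_q) *
          ((aₚ^2 * cₚ * a_q^2 * c_q)^4
            + (2*q^2+p^2)*(3*q^2-2*p^2)*(aₚ^2 * cₚ * a_q^2 * c_q)^2
            + p^8 - 14*p^6*q^2 + 4*p^4*q^4 + 10*p^2*q^6 + q^8)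
        = (bₚ^2 * cₚ * b_q^2 * c_q) *
          ((bₚ^2 * cₚ * b_q^2 * c_q)^4
            + (2*p^2+q^2)*(3*p^2-2*q^2)*(bₚ^2 * cₚ * b_q^2 * c_q)^2
            + q^8 - 14*q^6*p^2 + 4*q^4*p^4 + 10*q^2*p^6 + p^8) →
        Q p q (aₚ^2 * cₚ * a_q^2 * c_q) = 0 ∧
        Q p q (-(aₚ^2 * cₚ * a_q^2 * c_q)) = 0) := by
  -- The pure-algebra direction, proved first while `p`, `q` are still variables.
  have hmain : ∀ aₚ bₚ cₚ a_q b_q c_q : ℤ,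
      0 < aₚ → 0 < bₚ → 0 < cₚ → 0 < a_q → 0 < b_q → 0 < c_q →
      List.Pairwise (fun x y => IsCoprime x y) [aₚ, bₚ, cₚ, a_q, b_q, c_q] →
      p = aₚ * bₚ * cₚ → q = a_q * b_q * c_q →
      (aₚ^2 * cₚ * a_q^2 * c_q) *
        ((aₚ^2 * cₚ * a_q^2 * c_q)^4
          + (2*q^2+p^2)*(3*q^2-2*p^2)*(aₚ^2 * cₚ * a_q^2 * c_q)^2
          + p^8 - 14*p^6*q^2 + 4*p^4*q^4 + 10*p^2*q^6 + q^8)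
      = (bₚ^2 * cₚ * b_q^2 * c_q) *
        ((bₚ^2 * cₚ * b_q^2 * c_q)^4
          + (2*p^2+q^2)*(3*p^2-2*q^2)*(bₚ^2 * cₚ * b_q^2 * c_q)^2
          + q^8 - 14*q^6*p^2 + 4*q^4*p^4 + 10*q^2*p^6 + p^8) →
      Q p q (aₚ^2 * cₚ * a_q^2 * c_q) = 0 ∧
      Q p q (-(aₚ^2 * cₚ * a_q^2 * c_q)) = 0 := by
    intro a b c a' b' c' _ _ _ _ _ _ _ h1 h2 heq
    subst h1; subst h2
    constructor
    · simp only [Q]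
      linear_combination (a^2 * c * a'^2 * c')^5 * heq
    · rw [Q_neg]
      simp only [Q]
      linear_combination (a^2 * c * a'^2 * c')^5 * heq
  refine ⟨⟨?_, ?_⟩, hmain⟩
  swap
  · -- backward direction of the iff
    rintro ⟨a, b, c, a', b', c', h1, h2, h3, h4, h5, h6, h7, h8, h9, h10⟩
    exact ⟨a^2 * c * a'^2 * c',
      (hmain a b c a' b' c' h1 h2 h3 h4 h5 h6 h7 h8 h9 h10).1⟩
  -- forward direction
  rintro ⟨t, ht⟩
  lift p to ℕ using hp.le with pn
  lift q to ℕ using hq.le with qn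
  have hpn : 0 < pn := by exact_mod_cast hp
  have hqn : 0 < qn := by exact_mod_cast hq
  have hco : Nat.Coprime pn qn := Nat.isCoprime_iff_coprime.mp hpq
  have ht0 : t ≠ 0 := by
    rintro rfl
    simp only [Q] at ht
    norm_num at ht
    rcases ht with h | h
    · exact hqn.ne' (by exact_mod_cast h)
    · exact hpn.ne' (by exact_mod_cast h)
  set T := t.natAbs with hTdef
  have hT0 : T ≠ 0 := Int.natAbs_ne_zero.mpr ht0
  have hQT : Q (pn:ℤ) (qn:ℤ) (T:ℤ) = 0 := by
    rcases Int.natAbs_eq t with h | h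
    · rw [h] at ht; exact ht
    · rw [h, Q_neg] at ht; exact ht
  simp only [Q] at hQT
  -- Step 1 : T ∣ pn^2 * qn^2
  have hTdvd : T ∣ pn ^ 2 * qn ^ 2 := by
    rw [← Nat.factorization_le_iff_dvd hT0 (by positivity), Finsupp.le_def]
    intro ℓ
    by_cases hℓ : ℓ.Prime
    · by_contra hltv
      push_neg at hltv
      set v := (pn ^ 2 * qn ^ 2).factorization ℓ with hvdef
      have hdvdTn : ℓ ^ (v + 1) ∣ T :=
        dvd_trans (pow_dvd_pow ℓ (by omega)) (Nat.ordProj_dvd T ℓ)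
      have hdvdT : (ℓ:ℤ) ^ (v + 1) ∣ (T:ℤ) := by exact_mod_cast hdvdTn
      have hdvdM : (ℓ:ℤ) ^ v ∣ ((pn:ℤ) ^ 2 * (qn:ℤ) ^ 2) := by
        have := Nat.ordProj_dvd (pn ^ 2 * qn ^ 2) ℓ
        exact_mod_cast this
      have hTj : ∀ j : ℕ, (ℓ:ℤ) ^ ((v + 1) * j) ∣ (T:ℤ) ^ j := by
        intro j
        have := pow_dvd_pow_of_dvd hdvdT j
        rwa [← pow_mul] at this
      have hM5 : ((pn:ℤ) ^ 2 * (qn:ℤ) ^ 2) ^ 5 =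
          (T:ℤ)^10 + (2*(qn:ℤ)^2+(pn:ℤ)^2)*(3*(qn:ℤ)^2-2*(pn:ℤ)^2)*(T:ℤ)^8
          + ((qn:ℤ)^8+10*(pn:ℤ)^2*(qn:ℤ)^6+4*(pn:ℤ)^4*(qn:ℤ)^4-14*(pn:ℤ)^6*(qn:ℤ)^2+(pn:ℤ)^8)*(T:ℤ)^6
          - (((pn:ℤ)^2*(qn:ℤ)^2)*(T:ℤ)^4)*((pn:ℤ)^8+10*(qn:ℤ)^2*(pn:ℤ)^6+4*(qn:ℤ)^4*(pn:ℤ)^4-14*(qn:ℤ)^6*(pn:ℤ)^2+(qn:ℤ)^8)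
          - ((((pn:ℤ)^2*(qn:ℤ)^2))^3*(T:ℤ)^2)*((2*(pn:ℤ)^2+(qn:ℤ)^2)*(3*(pn:ℤ)^2-2*(qn:ℤ)^2)) := by
        linear_combination -hQT
      have hkey : (ℓ:ℤ) ^ (5 * v + 1) ∣ ((pn:ℤ) ^ 2 * (qn:ℤ) ^ 2) ^ 5 := by
        rw [hM5]
        have t10 : (ℓ:ℤ) ^ (5 * v + 1) ∣ (T:ℤ) ^ 10 :=
          (pow_dvd_pow _ (by omega : 5 * v + 1 ≤ (v + 1) * 10)).trans (hTj 10)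
        have t8 : (ℓ:ℤ) ^ (5 * v + 1) ∣ (T:ℤ) ^ 8 :=
          (pow_dvd_pow _ (by omega : 5 * v + 1 ≤ (v + 1) * 8)).trans (hTj 8)
        have t6 : (ℓ:ℤ) ^ (5 * v + 1) ∣ (T:ℤ) ^ 6 :=
          (pow_dvd_pow _ (by omega : 5 * v + 1 ≤ (v + 1) * 6)).trans (hTj 6)
        have t4 : (ℓ:ℤ) ^ (5 * v + 1) ∣ ((pn:ℤ) ^ 2 * (qn:ℤ) ^ 2) * (T:ℤ) ^ 4 := by
          have := mul_dvd_mul hdvdM (hTj 4)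
          rw [← pow_add] at this
          exact (pow_dvd_pow _ (by omega : 5 * v + 1 ≤ v + (v + 1) * 4)).trans this
        have hdvdM3 : (ℓ:ℤ) ^ (3 * v) ∣ ((pn:ℤ) ^ 2 * (qn:ℤ) ^ 2) ^ 3 := by
          have := pow_dvd_pow_of_dvd hdvdM 3
          rwa [← pow_mul, mul_comm v 3] at this
        have t2 : (ℓ:ℤ) ^ (5 * v + 1) ∣ ((pn:ℤ) ^ 2 * (qn:ℤ) ^ 2) ^ 3 * (T:ℤ) ^ 2 := by
          have := mul_dvd_mul hdvdM3 (hTj 2)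
          rw [← pow_add] at this
          exact (pow_dvd_pow _ (by omega : 5 * v + 1 ≤ 3 * v + (v + 1) * 2)).trans this
        exact dvd_sub (dvd_sub (dvd_add (dvd_add t10 (t8.mul_left _)) (t6.mul_left _))
          (t4.mul_right _)) (t2.mul_right _)
      have hkeyn : ℓ ^ (5 * v + 1) ∣ (pn ^ 2 * qn ^ 2) ^ 5 := by exact_mod_cast hkey
      have hle : 5 * v + 1 ≤ ((pn ^ 2 * qn ^ 2) ^ 5).factorization ℓ :=
        (hℓ.pow_dvd_iff_le_factorization (by positivity)).mp hkeyn
      rw [Nat.factorization_pow] at hle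
      simp only [Finsupp.smul_apply, smul_eq_mul] at hle
      omega
    · rw [Nat.factorization_eq_zero_of_not_prime T hℓ]
      exact Nat.zero_le _
  -- Step 2 : split T and define B
  obtain ⟨Tp, Tq, hTpdvd, hTqdvd, hTsplit⟩ := exists_dvd_and_dvd_of_dvd_mul hTdvd
  have hTp0 : Tp ≠ 0 := by rintro rfl; exact hT0 (by simp [hTsplit])
  have hTq0 : Tq ≠ 0 := by rintro rfl; exact hT0 (by simp [hTsplit])
  set B := pn ^ 2 * qn ^ 2 / T with hBdef
  have hB : T * B = pn ^ 2 * qn ^ 2 := Nat.mul_div_cancel' hTdvd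
  have hB0 : B ≠ 0 := by
    rintro h
    rw [h, mul_zero] at hB
    exact (by positivity : 0 < pn ^ 2 * qn ^ 2).ne' hB.symm
  have hTB : (T:ℤ) * (B:ℤ) = (pn:ℤ) ^ 2 * (qn:ℤ) ^ 2 := by exact_mod_cast hB
  -- Step 3 : the balance equation for T and B
  have h5 : (T:ℤ)^5 * ((T:ℤ) * ((T:ℤ)^4
        + (2*(qn:ℤ)^2+(pn:ℤ)^2)*(3*(qn:ℤ)^2-2*(pn:ℤ)^2)*(T:ℤ)^2
        + ((qn:ℤ)^8+10*(pn:ℤ)^2*(qn:ℤ)^6+4*(pn:ℤ)^4*(qn:ℤ)^4-14*(pn:ℤ)^6*(qn:ℤ)^2+(pn:ℤ)^8)))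
      = (T:ℤ)^5 * ((B:ℤ) * ((B:ℤ)^4
        + (2*(pn:ℤ)^2+(qn:ℤ)^2)*(3*(pn:ℤ)^2-2*(qn:ℤ)^2)*(B:ℤ)^2
        + ((pn:ℤ)^8+10*(qn:ℤ)^2*(pn:ℤ)^6+4*(qn:ℤ)^4*(pn:ℤ)^4-14*(qn:ℤ)^6*(pn:ℤ)^2+(qn:ℤ)^8))) := by
    linear_combination hQT - ((((T:ℤ)*(B:ℤ))^4 + ((T:ℤ)*(B:ℤ))^3*((pn:ℤ)^2*(qn:ℤ)^2)
      + ((T:ℤ)*(B:ℤ))^2*((pn:ℤ)^2*(qn:ℤ)^2)^2 + ((T:ℤ)*(B:ℤ))*((pn:ℤ)^2*(qn:ℤ)^2)^3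
      + ((pn:ℤ)^2*(qn:ℤ)^2)^4)
      + ((2*(pn:ℤ)^2+(qn:ℤ)^2)*(3*(pn:ℤ)^2-2*(qn:ℤ)^2))*(T:ℤ)^2*(((T:ℤ)*(B:ℤ))^2
        + ((T:ℤ)*(B:ℤ))*((pn:ℤ)^2*(qn:ℤ)^2) + ((pn:ℤ)^2*(qn:ℤ)^2)^2)
      + ((pn:ℤ)^8+10*(qn:ℤ)^2*(pn:ℤ)^6+4*(qn:ℤ)^4*(pn:ℤ)^4-14*(qn:ℤ)^6*(pn:ℤ)^2+(qn:ℤ)^8)*(T:ℤ)^4) * hTB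
  have hE := mul_left_cancel₀ (pow_ne_zero 5 (by exact_mod_cast hT0 : (T:ℤ) ≠ 0)) h5
  -- Step 4 : valuation conditions
  have hvalgen : ∀ ℓ : ℕ, ℓ.Prime → ℓ ∣ pn →
      T.factorization ℓ = 0 ∨ T.factorization ℓ = pn.factorization ℓ ∨
      T.factorization ℓ = 2 * pn.factorization ℓ := by
    intro ℓ hℓ hdp
    have hdq : ¬ ℓ ∣ qn := by
      intro h
      exact hℓ.ne_one (Nat.dvd_one.mp (hco ▸ Nat.dvd_gcd hdp h))
    set k := T.factorization ℓ with hkdef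
    set m := B.factorization ℓ with hmdef
    set e := pn.factorization ℓ with hedef
    have hkm : k + m = 2 * e := by
      have h1 : (T * B).factorization ℓ = k + m := by
        rw [Nat.factorization_mul hT0 hB0]; simp [hkdef, hmdef]
      have h2 : (T * B).factorization ℓ = 2 * e := by
        rw [hB, Nat.factorization_mul (by positivity) (by positivity),
          Nat.factorization_pow, Nat.factorization_pow]
        simp [Nat.factorization_eq_zero_of_not_dvd hdq, mul_comm, hedef]
      omega
    have hQint : (ℓ:ℤ) ∣ (qn:ℤ) → False := fun h => hdq (by exact_mod_cast h)
    have hkeyeq : 1 ≤ k → 1 ≤ m → k = m := by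
      intro hk1 hm1
      by_contra hne'
      have hℓT : (ℓ:ℤ) ∣ (T:ℤ) := by
        have : ℓ ∣ T := dvd_trans (dvd_pow_self ℓ (by omega : k ≠ 0)) (Nat.ordProj_dvd T ℓ)
        exact_mod_cast this
      have hℓB : (ℓ:ℤ) ∣ (B:ℤ) := by
        have : ℓ ∣ B := dvd_trans (dvd_pow_self ℓ (by omega : m ≠ 0)) (Nat.ordProj_dvd B ℓ)
        exact_mod_cast this
      have hℓP : (ℓ:ℤ) ∣ (pn:ℤ) := by exact_mod_cast hdp
      have hprime : Prime (ℓ:ℤ) := Nat.prime_iff_prime_int.mp hℓ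
      have hu : ¬ (ℓ:ℤ) ∣ ((T:ℤ)^4
          + (2*(qn:ℤ)^2+(pn:ℤ)^2)*(3*(qn:ℤ)^2-2*(pn:ℤ)^2)*(T:ℤ)^2
          + ((qn:ℤ)^8+10*(pn:ℤ)^2*(qn:ℤ)^6+4*(pn:ℤ)^4*(qn:ℤ)^4-14*(pn:ℤ)^6*(qn:ℤ)^2+(pn:ℤ)^8)) := by
        intro hdvd
        apply hQint
        apply hprime.dvd_of_dvd_pow (n := 8)
        have hrw : (qn:ℤ)^8 = ((T:ℤ)^4
            + (2*(qn:ℤ)^2+(pn:ℤ)^2)*(3*(qn:ℤ)^2-2*(pn:ℤ)^2)*(T:ℤ)^2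
            + ((qn:ℤ)^8+10*(pn:ℤ)^2*(qn:ℤ)^6+4*(pn:ℤ)^4*(qn:ℤ)^4-14*(pn:ℤ)^6*(qn:ℤ)^2+(pn:ℤ)^8))
            - (T:ℤ)^2*((T:ℤ)^2 + (2*(qn:ℤ)^2+(pn:ℤ)^2)*(3*(qn:ℤ)^2-2*(pn:ℤ)^2))
            - (pn:ℤ)^2*(10*(qn:ℤ)^6+4*(pn:ℤ)^2*(qn:ℤ)^4-14*(pn:ℤ)^4*(qn:ℤ)^2+(pn:ℤ)^6) := by
          ring
        rw [hrw]
        exact dvd_sub (dvd_sub hdvd (dvd_mul_of_dvd_left (dvd_pow hℓT two_ne_zero) _))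
          (dvd_mul_of_dvd_left (dvd_pow hℓP two_ne_zero) _)
      have hw : ¬ (ℓ:ℤ) ∣ ((B:ℤ)^4
          + (2*(pn:ℤ)^2+(qn:ℤ)^2)*(3*(pn:ℤ)^2-2*(qn:ℤ)^2)*(B:ℤ)^2
          + ((pn:ℤ)^8+10*(qn:ℤ)^2*(pn:ℤ)^6+4*(qn:ℤ)^4*(pn:ℤ)^4-14*(qn:ℤ)^6*(pn:ℤ)^2+(qn:ℤ)^8)) := by
        intro hdvd
        apply hQint
        apply hprime.dvd_of_dvd_pow (n := 8)
        have hrw : (qn:ℤ)^8 = ((B:ℤ)^4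
            + (2*(pn:ℤ)^2+(qn:ℤ)^2)*(3*(pn:ℤ)^2-2*(qn:ℤ)^2)*(B:ℤ)^2
            + ((pn:ℤ)^8+10*(qn:ℤ)^2*(pn:ℤ)^6+4*(qn:ℤ)^4*(pn:ℤ)^4-14*(qn:ℤ)^6*(pn:ℤ)^2+(qn:ℤ)^8))
            - (B:ℤ)^2*((B:ℤ)^2 + (2*(pn:ℤ)^2+(qn:ℤ)^2)*(3*(pn:ℤ)^2-2*(qn:ℤ)^2))
            - (pn:ℤ)^2*((pn:ℤ)^6+10*(qn:ℤ)^2*(pn:ℤ)^4+4*(qn:ℤ)^4*(pn:ℤ)^2-14*(qn:ℤ)^6) := by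
          ring
        rw [hrw]
        exact dvd_sub (dvd_sub hdvd (dvd_mul_of_dvd_left (dvd_pow hℓB two_ne_zero) _))
          (dvd_mul_of_dvd_left (dvd_pow hℓP two_ne_zero) _)
      rcases Nat.lt_or_ge k m with hlt | hge
      · -- k < m
        have hxT : ¬ (ℓ:ℤ)^(k+1) ∣ (T:ℤ) := by
          have := Nat.pow_succ_factorization_not_dvd hT0 hℓ
          rw [← hkdef] at this
          exact fun h => this (by exact_mod_cast h)
        have hyB : (ℓ:ℤ)^(k+1) ∣ (B:ℤ) := by
          have : ℓ^(k+1) ∣ B := dvd_trans (pow_dvd_pow ℓ (by omega)) (Nat.ordProj_dvd B ℓ)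
          exact_mod_cast this
        exact aux_pp hℓ hxT hu hE hyB
      · -- m < k (since k ≠ m)
        have hlt' : m < k := by omega
        have hxB : ¬ (ℓ:ℤ)^(m+1) ∣ (B:ℤ) := by
          have := Nat.pow_succ_factorization_not_dvd hB0 hℓ
          rw [← hmdef] at this
          exact fun h => this (by exact_mod_cast h)
        have hyT : (ℓ:ℤ)^(m+1) ∣ (T:ℤ) := by
          have : ℓ^(m+1) ∣ T := dvd_trans (pow_dvd_pow ℓ (by omega)) (Nat.ordProj_dvd T ℓ)
          exact_mod_cast this
        exact aux_pp hℓ hxB hw hE.symm hyT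
    rcases Nat.eq_zero_or_pos k with hk0 | hk1
    · exact Or.inl hk0
    · rcases Nat.eq_zero_or_pos m with hm0 | hm1
      · right; right; omega
      · right; left
        have := hkeyeq hk1 hm1
        omega
  -- transfer valuations to Tp and Tq
  have hTpfac : ∀ ℓ : ℕ, ℓ.Prime → ℓ ∣ pn → Tp.factorization ℓ = T.factorization ℓ := by
    intro ℓ hℓ hdp
    have hdq : ¬ ℓ ∣ qn := by
      intro h
      exact hℓ.ne_one (Nat.dvd_one.mp (hco ▸ Nat.dvd_gcd hdp h))
    have hTqf : Tq.factorization ℓ = 0 :=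
      Nat.factorization_eq_zero_of_not_dvd fun h => hdq (hℓ.dvd_of_dvd_pow (h.trans hTqdvd))
    rw [hTsplit, Nat.factorization_mul hTp0 hTq0]
    simp [hTqf]
  have hTqfac : ∀ ℓ : ℕ, ℓ.Prime → ℓ ∣ qn → Tq.factorization ℓ = T.factorization ℓ := by
    intro ℓ hℓ hdq
    have hdp : ¬ ℓ ∣ pn := by
      intro h
      exact hℓ.ne_one (Nat.dvd_one.mp (hco ▸ Nat.dvd_gcd h hdq))
    have hTpf : Tp.factorization ℓ = 0 :=
      Nat.factorization_eq_zero_of_not_dvd fun h => hdp (hℓ.dvd_of_dvd_pow (h.trans hTpdvd))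
    rw [hTsplit, Nat.factorization_mul hTp0 hTq0]
    simp [hTpf]
  have hvalp : ∀ ℓ : ℕ, ℓ.Prime →
      Tp.factorization ℓ = 0 ∨ Tp.factorization ℓ = pn.factorization ℓ ∨
      Tp.factorization ℓ = 2 * pn.factorization ℓ := by
    intro ℓ hℓ
    by_cases hdp : ℓ ∣ pn
    · rw [hTpfac ℓ hℓ hdp]
      exact hvalgen ℓ hℓ hdp
    · left
      exact Nat.factorization_eq_zero_of_not_dvd
        fun h => hdp (hℓ.dvd_of_dvd_pow (h.trans hTpdvd))
  -- symmetric valuation condition for q : note the symmetric roles of T and B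
  have hvalgenq : ∀ ℓ : ℕ, ℓ.Prime → ℓ ∣ qn →
      T.factorization ℓ = 0 ∨ T.factorization ℓ = qn.factorization ℓ ∨
      T.factorization ℓ = 2 * qn.factorization ℓ := by
    intro ℓ hℓ hdq
    have hdp : ¬ ℓ ∣ pn := by
      intro h
      exact hℓ.ne_one (Nat.dvd_one.mp (hco ▸ Nat.dvd_gcd h hdq))
    set k := T.factorization ℓ with hkdef
    set m := B.factorization ℓ with hmdef
    set e := qn.factorization ℓ with hedef
    have hkm : k + m = 2 * e := by
      have h1 : (T * B).factorization ℓ = k + m := by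
        rw [Nat.factorization_mul hT0 hB0]; simp [hkdef, hmdef]
      have h2 : (T * B).factorization ℓ = 2 * e := by
        rw [hB, Nat.factorization_mul (by positivity) (by positivity),
          Nat.factorization_pow, Nat.factorization_pow]
        simp [Nat.factorization_eq_zero_of_not_dvd hdp, mul_comm, hedef]
      omega
    have hPint : (ℓ:ℤ) ∣ (pn:ℤ) → False := fun h => hdp (by exact_mod_cast h)
    have hkeyeq : 1 ≤ k → 1 ≤ m → k = m := by
      intro hk1 hm1
      by_contra hne'
      have hℓT : (ℓ:ℤ) ∣ (T:ℤ) := by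
        have : ℓ ∣ T := dvd_trans (dvd_pow_self ℓ (by omega : k ≠ 0)) (Nat.ordProj_dvd T ℓ)
        exact_mod_cast this
      have hℓB : (ℓ:ℤ) ∣ (B:ℤ) := by
        have : ℓ ∣ B := dvd_trans (dvd_pow_self ℓ (by omega : m ≠ 0)) (Nat.ordProj_dvd B ℓ)
        exact_mod_cast this
      have hℓQ : (ℓ:ℤ) ∣ (qn:ℤ) := by exact_mod_cast hdq
      have hprime : Prime (ℓ:ℤ) := Nat.prime_iff_prime_int.mp hℓ
      have hu : ¬ (ℓ:ℤ) ∣ ((T:ℤ)^4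
          + (2*(qn:ℤ)^2+(pn:ℤ)^2)*(3*(qn:ℤ)^2-2*(pn:ℤ)^2)*(T:ℤ)^2
          + ((qn:ℤ)^8+10*(pn:ℤ)^2*(qn:ℤ)^6+4*(pn:ℤ)^4*(qn:ℤ)^4-14*(pn:ℤ)^6*(qn:ℤ)^2+(pn:ℤ)^8)) := by
        intro hdvd
        apply hPint
        apply hprime.dvd_of_dvd_pow (n := 8)
        have hrw : (pn:ℤ)^8 = ((T:ℤ)^4
            + (2*(qn:ℤ)^2+(pn:ℤ)^2)*(3*(qn:ℤ)^2-2*(pn:ℤ)^2)*(T:ℤ)^2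
            + ((qn:ℤ)^8+10*(pn:ℤ)^2*(qn:ℤ)^6+4*(pn:ℤ)^4*(qn:ℤ)^4-14*(pn:ℤ)^6*(qn:ℤ)^2+(pn:ℤ)^8))
            - (T:ℤ)^2*((T:ℤ)^2 + (2*(qn:ℤ)^2+(pn:ℤ)^2)*(3*(qn:ℤ)^2-2*(pn:ℤ)^2))
            - (qn:ℤ)^2*((qn:ℤ)^6+10*(pn:ℤ)^2*(qn:ℤ)^4+4*(pn:ℤ)^4*(qn:ℤ)^2-14*(pn:ℤ)^6) := by
          ring
        rw [hrw]
        exact dvd_sub (dvd_sub hdvd (dvd_mul_of_dvd_left (dvd_pow hℓT two_ne_zero) _))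
          (dvd_mul_of_dvd_left (dvd_pow hℓQ two_ne_zero) _)
      have hw : ¬ (ℓ:ℤ) ∣ ((B:ℤ)^4
          + (2*(pn:ℤ)^2+(qn:ℤ)^2)*(3*(pn:ℤ)^2-2*(qn:ℤ)^2)*(B:ℤ)^2
          + ((pn:ℤ)^8+10*(qn:ℤ)^2*(pn:ℤ)^6+4*(qn:ℤ)^4*(pn:ℤ)^4-14*(qn:ℤ)^6*(pn:ℤ)^2+(qn:ℤ)^8)) := by
        intro hdvd
        apply hPint
        apply hprime.dvd_of_dvd_pow (n := 8)
        have hrw : (pn:ℤ)^8 = ((B:ℤ)^4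
            + (2*(pn:ℤ)^2+(qn:ℤ)^2)*(3*(pn:ℤ)^2-2*(qn:ℤ)^2)*(B:ℤ)^2
            + ((pn:ℤ)^8+10*(qn:ℤ)^2*(pn:ℤ)^6+4*(qn:ℤ)^4*(pn:ℤ)^4-14*(qn:ℤ)^6*(pn:ℤ)^2+(qn:ℤ)^8))
            - (B:ℤ)^2*((B:ℤ)^2 + (2*(pn:ℤ)^2+(qn:ℤ)^2)*(3*(pn:ℤ)^2-2*(qn:ℤ)^2))
            - (qn:ℤ)^2*(10*(pn:ℤ)^6+4*(qn:ℤ)^2*(pn:ℤ)^4-14*(qn:ℤ)^4*(pn:ℤ)^2+(qn:ℤ)^6) := by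
          ring
        rw [hrw]
        exact dvd_sub (dvd_sub hdvd (dvd_mul_of_dvd_left (dvd_pow hℓB two_ne_zero) _))
          (dvd_mul_of_dvd_left (dvd_pow hℓQ two_ne_zero) _)
      rcases Nat.lt_or_ge k m with hlt | hge
      · have hxT : ¬ (ℓ:ℤ)^(k+1) ∣ (T:ℤ) := by
          have := Nat.pow_succ_factorization_not_dvd hT0 hℓ
          rw [← hkdef] at this
          exact fun h => this (by exact_mod_cast h)
        have hyB : (ℓ:ℤ)^(k+1) ∣ (B:ℤ) := by
          have : ℓ^(k+1) ∣ B := dvd_trans (pow_dvd_pow ℓ (by omega)) (Nat.ordProj_dvd B ℓ)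
          exact_mod_cast this
        exact aux_pp hℓ hxT hu hE hyB
      · have hlt' : m < k := by omega
        have hxB : ¬ (ℓ:ℤ)^(m+1) ∣ (B:ℤ) := by
          have := Nat.pow_succ_factorization_not_dvd hB0 hℓ
          rw [← hmdef] at this
          exact fun h => this (by exact_mod_cast h)
        have hyT : (ℓ:ℤ)^(m+1) ∣ (T:ℤ) := by
          have : ℓ^(m+1) ∣ T := dvd_trans (pow_dvd_pow ℓ (by omega)) (Nat.ordProj_dvd T ℓ)
          exact_mod_cast this
        exact aux_pp hℓ hxB hw hE.symm hyT
    rcases Nat.eq_zero_or_pos k with hk0 | hk1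
    · exact Or.inl hk0
    · rcases Nat.eq_zero_or_pos m with hm0 | hm1
      · right; right; omega
      · right; left
        have := hkeyeq hk1 hm1
        omega
  have hvalq : ∀ ℓ : ℕ, ℓ.Prime →
      Tq.factorization ℓ = 0 ∨ Tq.factorization ℓ = qn.factorization ℓ ∨
      Tq.factorization ℓ = 2 * qn.factorization ℓ := by
    intro ℓ hℓ
    by_cases hdq : ℓ ∣ qn
    · rw [hTqfac ℓ hℓ hdq]
      exact hvalgenq ℓ hℓ hdq
    · left
      exact Nat.factorization_eq_zero_of_not_dvd
        fun h => hdq (hℓ.dvd_of_dvd_pow (h.trans hTqdvd))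
  -- Step 5 : decompose
  obtain ⟨ap, bp, cp, hap, hbp, hcp, hpeq, hTpeq, habp, hacp, hbcp⟩ :=
    decomp pn Tp hpn hTpdvd hvalp
  obtain ⟨aq, bq, cq, haq, hbq, hcq, hqeq, hTqeq, habq, hacq, hbcq⟩ :=
    decomp qn Tq hqn hTqdvd hvalq
  -- Step 6 : assemble the answer
  have hcross : ∀ x : ℕ, x ∣ pn → ∀ y : ℕ, y ∣ qn → Nat.Coprime x y :=
    fun x hx y hy => Nat.Coprime.coprime_dvd_left hx (Nat.Coprime.coprime_dvd_right hy hco)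
  have hapd : ap ∣ pn := ⟨bp * cp, by rw [hpeq]; ring⟩
  have hbpd : bp ∣ pn := ⟨ap * cp, by rw [hpeq]; ring⟩
  have hcpd : cp ∣ pn := ⟨ap * bp, by rw [hpeq]; ring⟩
  have haqd : aq ∣ qn := ⟨bq * cq, by rw [hqeq]; ring⟩
  have hbqd : bq ∣ qn := ⟨aq * cq, by rw [hqeq]; ring⟩
  have hcqd : cq ∣ qn := ⟨aq * bq, by rw [hqeq]; ring⟩
  have hA0 : ((ap:ℤ))^2 * (cp:ℤ) * ((aq:ℤ))^2 * (cq:ℤ) = (T:ℤ) := by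
    have hn : ap^2 * cp * aq^2 * cq = T := by
      rw [hTsplit, hTpeq, hTqeq]; ring
    exact_mod_cast hn
  have hB0eq : ((bp:ℤ))^2 * (cp:ℤ) * ((bq:ℤ))^2 * (cq:ℤ) = (B:ℤ) := by
    have hn2 : T * (bp^2 * cp * bq^2 * cq) = T * B := by
      rw [hB, hTsplit, hTpeq, hTqeq, hpeq, hqeq]; ring
    have hn : bp^2 * cp * bq^2 * cq = B :=
      Nat.eq_of_mul_eq_mul_left (Nat.pos_of_ne_zero hT0) hn2
    exact_mod_cast hn
  refine ⟨(ap:ℤ), (bp:ℤ), (cp:ℤ), (aq:ℤ), (bq:ℤ), (cq:ℤ),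
    by exact_mod_cast hap, by exact_mod_cast hbp, by exact_mod_cast hcp,
    by exact_mod_cast haq, by exact_mod_cast hbq, by exact_mod_cast hcq,
    ?_, by exact_mod_cast hpeq, by exact_mod_cast hqeq, ?_⟩
  · -- pairwise coprimality
    refine List.Pairwise.cons ?_ (List.Pairwise.cons ?_ (List.Pairwise.cons ?_
      (List.Pairwise.cons ?_ (List.Pairwise.cons ?_ (List.pairwise_singleton _ _)))))
    · intro x hx
      simp only [List.mem_cons, List.mem_singleton, List.not_mem_nil] at hx
      rcases hx with rfl | rfl | rfl | rfl | rfl | h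
      · exact natco habp
      · exact natco hacp
      · exact natco (hcross ap hapd aq haqd)
      · exact natco (hcross ap hapd bq hbqd)
      · exact natco (hcross ap hapd cq hcqd)
      · exact h.elim
    · intro x hx
      simp only [List.mem_cons, List.mem_singleton, List.not_mem_nil] at hx
      rcases hx with rfl | rfl | rfl | rfl | h
      · exact natco hbcp
      · exact natco (hcross bp hbpd aq haqd)
      · exact natco (hcross bp hbpd bq hbqd)
      · exact natco (hcross bp hbpd cq hcqd)
      · exact h.elim
    · intro x hx
      simp only [List.mem_cons, List.mem_singleton, List.not_mem_nil] at hx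
      rcases hx with rfl | rfl | rfl | h
      · exact natco (hcross cp hcpd aq haqd)
      · exact natco (hcross cp hcpd bq hbqd)
      · exact natco (hcross cp hcpd cq hcqd)
      · exact h.elim
    · intro x hx
      simp only [List.mem_cons, List.mem_singleton, List.not_mem_nil] at hx
      rcases hx with rfl | rfl | h
      · exact natco habq
      · exact natco hacq
      · exact h.elim
    · intro x hx
      simp only [List.mem_singleton] at hx
      subst hx
      exact natco hbcq
  · -- the balance equation
    rw [hA0, hB0eq]
    linear_combination hE
end
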